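/- arXiv:2110.10948 — 2 statements merged into one kernel-verified Lean document; each statement's English description precedes it below -/
import Mathlib

section
/- Let Q : Polynomial ℂ be a nonzero polynomial such that every root of Q lying in the closed unit ball Metric.closedBall (0:ℂ) 1 actually lies in the open unit ball Metric.ball (0:ℂ) 1 and is simple (Q.derivative.eval z ≠ 0 at every such root z). Then there exists δ > 0 such that for every function h : ℂ → ℂ with ContDiff ℝ 1 h and satisfying ‖h z‖ ≤ δ and ‖fderiv ℝ h z‖ ≤ δ for all z ∈ Metric.closedBall (0:ℂ) 1, the set {z ∈ Metric.ball (0:ℂ) 1 | Q.eval z + h z = 0} is finite and has the same cardinality (Set.ncard) as {z ∈ Metric.ball (0:ℂ) 1 | Q.eval z = 0}, and at each of its points z₀ the real derivative fderiv ℝ (fun z => Q.eval z + h z) z₀ is a bijective linear map. -/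
open Metric Set
open scoped NNReal

lemma aux_pos_lb {s : Set ℝ} (hs : s.Finite) (hpos : ∀ x ∈ s, 0 < x) :
    ∃ m > 0, ∀ x ∈ s, m ≤ x := by
  rcases s.eq_empty_or_nonempty with h | h
  · exact ⟨1, one_pos, by simp [h]⟩
  · obtain ⟨a, has, ha⟩ := Set.exists_min_image s id hs h
    exact ⟨a, hpos a has, ha⟩

lemma aux_lb_compact {K : Set ℂ} (hK : IsCompact K) {f : ℂ → ℂ} (hf : Continuous f)
    (h0 : ∀ z ∈ K, f z ≠ 0) : ∃ ε > 0, ∀ z ∈ K, ε ≤ ‖f z‖ := by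
  rcases K.eq_empty_or_nonempty with h | h
  · exact ⟨1, one_pos, by simp [h]⟩
  · obtain ⟨z, hz, hmin⟩ := hK.exists_isMinOn h (hf.norm.continuousOn)
    exact ⟨‖f z‖, norm_pos_iff.2 (h0 z hz), fun w hw => hmin hw⟩

lemma aux_bijective (A : ℂ →L[ℝ] ℂ) (c : ℝ) (hc : 0 < c) (hA : ∀ x, c * ‖x‖ ≤ ‖A x‖) :
    Function.Bijective A := by
  have hinj : Function.Injective A := by
    intro x y hxy
    have h0 : A (x - y) = 0 := by rw [map_sub, hxy, sub_self]
    have := hA (x - y)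
    rw [h0, norm_zero] at this
    have hle : ‖x - y‖ ≤ 0 := by nlinarith [norm_nonneg (x - y)]
    rwa [norm_le_zero_iff, sub_eq_zero] at hle
  have hsurj : Function.Surjective A :=
    (LinearMap.injective_iff_surjective (f := (A : ℂ →ₗ[ℝ] ℂ))).1 hinj
  exact ⟨hinj, hsurj⟩

lemma aux_mvt {f : ℂ → ℂ} {d : ℂ → ℂ} (hf : ∀ z, HasDerivAt f (d z) z)
    {s : Set ℂ} (hs : Convex ℝ s) {C : ℝ} (hC : ∀ z ∈ s, ‖d z‖ ≤ C)
    {z w : ℂ} (hz : z ∈ s) (hw : w ∈ s) : ‖f w - f z‖ ≤ C * ‖w - z‖ := by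
  apply hs.norm_image_sub_le_of_norm_hasFDerivWithin_le
    (f' := fun x => ((ContinuousLinearMap.smulRight (1 : ℂ →L[ℂ] ℂ) (d x)).restrictScalars ℝ))
    (fun x hx => ((hf x).hasFDerivAt.restrictScalars ℝ).hasFDerivWithinAt) ?_ hz hw
  intro x hx
  rw [ContinuousLinearMap.norm_restrictScalars]
  simpa [ContinuousLinearMap.norm_smulRight_apply] using hC x hx

lemma aux_fixed (f : ℂ → ℂ) (T : ℂ → ℂ) (z₀ : ℂ) (r : ℝ) (hr : 0 < r)
    (hfix : ∀ z, T z = z ↔ f z = 0)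
    (hlip : ∀ z ∈ closedBall z₀ r, ∀ w ∈ closedBall z₀ r, dist (T z) (T w) ≤ (1/2) * dist z w)
    (hT0 : dist (T z₀) z₀ ≤ r / 2) :
    ∃ z ∈ closedBall z₀ r, f z = 0 ∧ ∀ w ∈ closedBall z₀ r, f w = 0 → w = z := by
  have hz₀ : z₀ ∈ closedBall z₀ r := mem_closedBall_self hr.le
  have hmaps : Set.MapsTo T (closedBall z₀ r) (closedBall z₀ r) := by
    intro z hz
    have h1 := hlip z hz z₀ hz₀
    have h2 : dist z z₀ ≤ r := mem_closedBall.1 hz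
    have : dist (T z) z₀ ≤ dist (T z) (T z₀) + dist (T z₀) z₀ := dist_triangle _ _ _
    rw [mem_closedBall]
    linarith
  have hcompl : IsComplete (closedBall z₀ r) := isClosed_closedBall.isComplete
  have hcontr : ContractingWith (1/2 : ℝ≥0)
      (hmaps.restrict T (closedBall z₀ r) (closedBall z₀ r)) := by
    constructor
    · rw [← NNReal.coe_lt_coe]; norm_num
    · apply LipschitzWith.of_dist_le_mul
      rintro ⟨x, hx⟩ ⟨y, hy⟩
      have h := hlip x hx y hy
      have hc : ((1/2 : ℝ≥0) : ℝ) = 1/2 := by norm_num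
      simp only [Set.MapsTo.restrict, Subtype.dist_eq, Subtype.map_coe, hc]
      exact h
  obtain ⟨y, hy, hyfix, -⟩ := hcontr.exists_fixedPoint' hcompl hmaps hz₀ (edist_ne_top _ _)
  refine ⟨y, hy, (hfix y).1 hyfix, fun w hw hw0 => ?_⟩
  have hwfix : T w = w := (hfix w).2 hw0
  have h2 := hlip w hw y hy
  rw [hwfix, hyfix] at h2
  have : dist w y ≤ 0 := by linarith
  exact dist_le_zero.1 this

/-- stability of the number of zeros (eq. (10) of the paper): a polynomial
all of whose roots in the closed unit disk are nondegenerate and interior keeps the same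
number of zeros in the open unit disk, all still nondegenerate, after any sufficiently
`C¹`-small real-differentiable perturbation `h`. -/
theorem zeros_stable_under_C1_small_perturbation
    (Q : Polynomial ℂ) (hQ : Q ≠ 0)
    (hroots : ∀ z ∈ Metric.closedBall (0 : ℂ) 1, Q.eval z = 0 →
      z ∈ Metric.ball (0 : ℂ) 1 ∧ Q.derivative.eval z ≠ 0) :
    ∃ δ : ℝ, 0 < δ ∧
      ∀ h : ℂ → ℂ, ContDiff ℝ 1 h →
        (∀ z ∈ Metric.closedBall (0 : ℂ) 1, ‖h z‖ ≤ δ ∧ ‖fderiv ℝ h z‖ ≤ δ) →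
        {z ∈ Metric.ball (0 : ℂ) 1 | Q.eval z + h z = 0}.Finite ∧
        {z ∈ Metric.ball (0 : ℂ) 1 | Q.eval z + h z = 0}.ncard
          = {z ∈ Metric.ball (0 : ℂ) 1 | Q.eval z = 0}.ncard ∧
        ∀ z₀ ∈ {z ∈ Metric.ball (0 : ℂ) 1 | Q.eval z + h z = 0},
          Function.Bijective (fderiv ℝ (fun z => Q.eval z + h z) z₀) := by
  classical
  set S : Set ℂ := {z ∈ Metric.ball (0 : ℂ) 1 | Q.eval z = 0} with hSdef
  have hSfin : S.Finite := (Q.finite_setOf_isRoot hQ).subset (fun z hz => hz.2)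
  have hSsub : ∀ z ∈ S, z ∈ Metric.ball (0:ℂ) 1 := fun z hz => hz.1
  have hS' : ∀ z ∈ S, Q.derivative.eval z ≠ 0 := fun z hz =>
    (hroots z (Metric.ball_subset_closedBall (hSsub z hz)) hz.2).2
  obtain ⟨m, hm, hmS'⟩ := aux_pos_lb (hSfin.image (fun z => ‖Q.derivative.eval z‖))
    (by rintro x ⟨z, hz, rfl⟩; exact norm_pos_iff.2 (hS' z hz))
  have hmS : ∀ z ∈ S, m ≤ ‖Q.derivative.eval z‖ := fun z hz => hmS' _ ⟨z, hz, rfl⟩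
  obtain ⟨d, hd, hdS'⟩ := aux_pos_lb
    (s := (fun p : ℂ × ℂ => dist p.1 p.2) '' ((S ×ˢ S) ∩ {p | p.1 ≠ p.2}))
    (((hSfin.prod hSfin).inter_of_left _).image _)
    (by rintro x ⟨⟨z, w⟩, ⟨⟨hz, hw⟩, hne⟩, rfl⟩; exact dist_pos.2 hne)
  have hdS : ∀ z ∈ S, ∀ w ∈ S, z ≠ w → d ≤ dist z w := fun z hz w hw hne =>
    hdS' _ ⟨(z, w), ⟨⟨hz, hw⟩, hne⟩, rfl⟩
  obtain ⟨b, hb, hbS'⟩ := aux_pos_lb (hSfin.image (fun z => 1 - ‖z‖))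
    (by rintro x ⟨z, hz, rfl⟩
        have := mem_ball_zero_iff.1 (hSsub z hz)
        show (0:ℝ) < 1 - ‖z‖
        linarith)
  have hbS : ∀ z ∈ S, b ≤ 1 - ‖z‖ := fun z hz => hbS' _ ⟨z, hz, rfl⟩
  obtain ⟨C, hC⟩ := (isCompact_closedBall (0:ℂ) 2).exists_bound_of_continuousOn
    ((Q.derivative.derivative.continuous).continuousOn)
  set L := max C 0 with hLdef
  have hL0 : (0:ℝ) ≤ L := le_max_right _ _
  have hLb : ∀ w ∈ Metric.closedBall (0:ℂ) 2, ‖(Q.derivative.derivative).eval w‖ ≤ L :=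
    fun w hw => le_trans (hC w hw) (le_max_left _ _)
  set r := min (min (d/3) (b/2)) (m/(4*(L+1))) with hrdef
  have hr : 0 < r := lt_min (lt_min (by linarith) (by linarith)) (by positivity)
  have hrd : r ≤ d/3 := le_trans (min_le_left _ _) (min_le_left _ _)
  have hrb : r ≤ b/2 := le_trans (min_le_left _ _) (min_le_right _ _)
  have hrm : r ≤ m/(4*(L+1)) := min_le_right _ _
  have hLr : L * r ≤ m/4 := by
    have h1 : L * r ≤ L * (m/(4*(L+1))) := mul_le_mul_of_nonneg_left hrm hL0
    have h2 : L * (m/(4*(L+1))) ≤ m/4 := by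
      rw [mul_comm, div_mul_eq_mul_div, div_le_div_iff₀ (by positivity) (by norm_num)]
      nlinarith
    linarith
  have hball : ∀ z₀ ∈ S, Metric.closedBall z₀ r ⊆ Metric.ball (0:ℂ) 1 := by
    intro z₀ hz₀ z hz
    have h1 : dist z z₀ ≤ r := Metric.mem_closedBall.1 hz
    have h2 := hbS z₀ hz₀
    have h3 : dist z 0 ≤ dist z z₀ + dist z₀ 0 := dist_triangle _ _ _
    rw [Metric.mem_ball, dist_zero_right]
    have h4 : dist z₀ 0 = ‖z₀‖ := dist_zero_right _
    rw [dist_zero_right, h4] at h3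
    linarith
  have hball2 : ∀ z₀ ∈ S, Metric.closedBall z₀ r ⊆ Metric.closedBall (0:ℂ) 2 := by
    intro z₀ hz₀ z hz
    exact Metric.closedBall_subset_closedBall one_le_two
      (Metric.ball_subset_closedBall (hball z₀ hz₀ hz))
  have hKcomp : IsCompact (Metric.closedBall (0:ℂ) 1 \ ⋃ z₀ ∈ S, Metric.ball z₀ r) :=
    (isCompact_closedBall _ _).diff (isOpen_biUnion fun _ _ => Metric.isOpen_ball)
  have hnonv : ∀ z ∈ Metric.closedBall (0:ℂ) 1 \ ⋃ z₀ ∈ S, Metric.ball z₀ r,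
      Q.eval z ≠ 0 := by
    intro z hz h0
    exact hz.2 (Set.mem_biUnion (⟨(hroots z hz.1 h0).1, h0⟩ : z ∈ S) (Metric.mem_ball_self hr))
  obtain ⟨ε, hε, hεK⟩ := aux_lb_compact hKcomp (Q.continuous) hnonv
  refine ⟨min (ε/2) (min (m*r/4) (m/4)), by positivity, ?_⟩
  intro h hh hbnd
  set δ := min (ε/2) (min (m*r/4) (m/4)) with hδdef
  have hδε : δ ≤ ε/2 := min_le_left _ _
  have hδmr : δ ≤ m*r/4 := le_trans (min_le_right _ _) (min_le_left _ _)
  have hδm : δ ≤ m/4 := le_trans (min_le_right _ _) (min_le_right _ _)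
  have hδ0 : 0 ≤ δ := le_min (by positivity) (le_min (by positivity) (by positivity))
  have hdiffh : Differentiable ℝ h := hh.differentiable one_ne_zero
  have hliph : ∀ (s : Set ℂ), s ⊆ Metric.closedBall (0:ℂ) 1 → Convex ℝ s →
      ∀ z ∈ s, ∀ w ∈ s, ‖h w - h z‖ ≤ δ * ‖w - z‖ := by
    intro s hs hconv z hz w hw
    exact hconv.norm_image_sub_le_of_norm_hasFDerivWithin_le
      (fun x hx => (hdiffh x).hasFDerivAt.hasFDerivWithinAt)
      (fun x hx => (hbnd x (hs hx)).2) hz hw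
  have hQ'd : ∀ z : ℂ, HasDerivAt (fun w => Q.derivative.eval w)
      (Q.derivative.derivative.eval z) z := fun z => Q.derivative.hasDerivAt z
  have hQd : ∀ z : ℂ, HasDerivAt (fun w => Q.eval w) (Q.derivative.eval z) z :=
    fun z => Q.hasDerivAt z
  have hninv : ∀ z₀ ∈ S, ‖Polynomial.eval z₀ Q.derivative‖⁻¹ ≤ m⁻¹ := by
    intro z₀ hz₀
    exact inv_anti₀ hm (hmS z₀ hz₀)
  have key : ∀ z₀ : ℂ, ∃ zh : ℂ, z₀ ∈ S →
      zh ∈ Metric.closedBall z₀ r ∧ (Q.eval zh + h zh = 0) ∧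
      ∀ w ∈ Metric.closedBall z₀ r, Q.eval w + h w = 0 → w = zh := by
    intro z₀
    by_cases hz₀ : z₀ ∈ S
    swap
    · exact ⟨0, fun hmem => absurd hmem hz₀⟩
    set c := Q.derivative.eval z₀ with hcdef
    have hmc : m ≤ ‖c‖ := hmS z₀ hz₀
    have hc0 : c ≠ 0 := hS' z₀ hz₀
    have hci : ‖c‖⁻¹ ≤ m⁻¹ := hninv z₀ hz₀
    set T : ℂ → ℂ := fun z => z₀ - c⁻¹ * (Q.eval z - c*(z - z₀) + h z) with hTdef
    have hTz : ∀ z, T z - z = -(c⁻¹ * (Q.eval z + h z)) := by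
      intro z
      show z₀ - c⁻¹ * (Q.eval z - c*(z - z₀) + h z) - z = -(c⁻¹ * (Q.eval z + h z))
      field_simp
      ring
    have hfix : ∀ z, T z = z ↔ Q.eval z + h z = 0 := by
      intro z
      rw [← sub_eq_zero (a := T z), hTz z, neg_eq_zero, mul_eq_zero]
      simp [inv_eq_zero, hc0]
    have hsub1 : Metric.closedBall z₀ r ⊆ Metric.closedBall (0:ℂ) 1 :=
      (hball z₀ hz₀).trans Metric.ball_subset_closedBall
    have hQ'c : ∀ x ∈ Metric.closedBall z₀ r, ‖Q.derivative.eval x - c‖ ≤ L * r := by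
      intro x hx
      have h1 := aux_mvt hQ'd (convex_closedBall z₀ r)
        (fun y hy => hLb y (hball2 z₀ hz₀ hy)) (Metric.mem_closedBall_self hr.le) hx
      have h2 : ‖x - z₀‖ ≤ r := by
        rw [← dist_eq_norm]; exact Metric.mem_closedBall.1 hx
      calc ‖Q.derivative.eval x - c‖ ≤ L * ‖x - z₀‖ := h1
        _ ≤ L * r := mul_le_mul_of_nonneg_left h2 hL0
    have hTlip : ∀ z ∈ Metric.closedBall z₀ r, ∀ w ∈ Metric.closedBall z₀ r,
        dist (T z) (T w) ≤ (1/2) * dist z w := by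
      intro z hz w hw
      have hq : ∀ x : ℂ, HasDerivAt (fun y => Q.eval y - c * y)
          (Q.derivative.eval x - c) x := by
        intro x
        exact ((hQd x).sub ((hasDerivAt_id' x).const_mul c)).congr_deriv (by ring)
      have hqlip := aux_mvt hq (convex_closedBall z₀ r) hQ'c hw hz
      have hhl := hliph _ hsub1 (convex_closedBall z₀ r) w hw z hz
      have hTsub : T z - T w = -(c⁻¹) * ((Q.eval z - c*z + h z) - (Q.eval w - c*w + h w)) := by
        show (z₀ - c⁻¹ * (Q.eval z - c*(z - z₀) + h z)) -
          (z₀ - c⁻¹ * (Q.eval w - c*(w - z₀) + h w)) = _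
        ring
      rw [dist_eq_norm, hTsub, norm_mul, norm_neg, norm_inv]
      have hdiffb : ‖(Q.eval z - c*z + h z) - (Q.eval w - c*w + h w)‖ ≤ (L*r + δ) * ‖z - w‖ := by
        have heq : (Q.eval z - c*z + h z) - (Q.eval w - c*w + h w)
            = ((Q.eval z - c*z) - (Q.eval w - c*w)) + (h z - h w) := by ring
        rw [heq]
        calc ‖((Q.eval z - c*z) - (Q.eval w - c*w)) + (h z - h w)‖
            ≤ ‖(Q.eval z - c*z) - (Q.eval w - c*w)‖ + ‖h z - h w‖ := norm_add_le _ _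
          _ ≤ (L*r) * ‖z - w‖ + δ * ‖z - w‖ := add_le_add hqlip hhl
          _ = (L*r + δ) * ‖z - w‖ := by ring
      set D := (Q.eval z - c*z + h z) - (Q.eval w - c*w + h w) with hD
      have h1 : ‖c‖⁻¹ * ‖D‖ ≤ m⁻¹ * ‖D‖ := mul_le_mul_of_nonneg_right hci (norm_nonneg _)
      have h2 : m⁻¹ * ‖D‖ ≤ m⁻¹ * ((L*r + δ) * ‖z - w‖) :=
        mul_le_mul_of_nonneg_left hdiffb (by positivity)
      have h3 : (L*r + δ) ≤ m/2 := by linarith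
      have h4 : m⁻¹ * ((L*r+δ) * ‖z-w‖) ≤ m⁻¹ * ((m/2) * ‖z-w‖) :=
        mul_le_mul_of_nonneg_left
          (mul_le_mul_of_nonneg_right h3 (norm_nonneg _)) (by positivity)
      have h5 : m⁻¹ * ((m/2) * ‖z-w‖) = (1/2) * ‖z-w‖ := by
        field_simp
      rw [dist_eq_norm]
      linarith
    have hT0 : dist (T z₀) z₀ ≤ r / 2 := by
      have hQz₀ : Q.eval z₀ = 0 := hz₀.2
      have hhz₀ : ‖h z₀‖ ≤ δ := (hbnd z₀ (Metric.ball_subset_closedBall (hSsub z₀ hz₀))).1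
      have heq : T z₀ - z₀ = -(c⁻¹ * h z₀) := by
        show z₀ - c⁻¹ * (Q.eval z₀ - c*(z₀ - z₀) + h z₀) - z₀ = _
        rw [hQz₀]; ring
      rw [dist_eq_norm, heq, norm_neg, norm_mul, norm_inv]
      have h1 : ‖c‖⁻¹ * ‖h z₀‖ ≤ m⁻¹ * δ :=
        mul_le_mul hci hhz₀ (norm_nonneg _) (by positivity)
      have h2 : m⁻¹ * δ ≤ m⁻¹ * (m*r/4) := mul_le_mul_of_nonneg_left hδmr (by positivity)
      have h3 : m⁻¹ * (m*r/4) = r/4 := by field_simp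
      linarith
    obtain ⟨zh, hzh1, hzh2, hzh3⟩ :=
      aux_fixed (fun z => Q.eval z + h z) T z₀ r hr hfix hTlip hT0
    exact ⟨zh, fun _ => ⟨hzh1, hzh2, hzh3⟩⟩
  choose φ hφ using key
  have hcover : ∀ z, z ∈ Metric.ball (0:ℂ) 1 → Q.eval z + h z = 0 →
      ∃ z₀ ∈ S, z ∈ Metric.closedBall z₀ r := by
    intro z hz hz0
    by_contra hcon
    push_neg at hcon
    have hzK : z ∈ Metric.closedBall (0:ℂ) 1 \ ⋃ z₀ ∈ S, Metric.ball z₀ r := by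
      refine ⟨Metric.ball_subset_closedBall hz, ?_⟩
      intro hmem
      obtain ⟨z₀, hz₀, hzb⟩ := Set.mem_iUnion₂.1 hmem
      exact absurd (Metric.ball_subset_closedBall hzb) (hcon z₀ hz₀)
    have hQz := hεK z hzK
    have hQeq : ‖Q.eval z‖ = ‖h z‖ := by
      have heq : Q.eval z = -(h z) := by
        rw [eq_neg_iff_add_eq_zero]; exact hz0
      rw [heq, norm_neg]
    have hhz : ‖h z‖ ≤ δ := (hbnd z (Metric.ball_subset_closedBall hz)).1
    rw [hQeq] at hQz
    linarith
  have hZeq : {z ∈ Metric.ball (0:ℂ) 1 | Q.eval z + h z = 0} = φ '' S := by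
    ext z
    constructor
    · rintro ⟨hz1, hz2⟩
      obtain ⟨z₀, hz₀S, hzball⟩ := hcover z hz1 hz2
      obtain ⟨hφ1, hφ2, hφ3⟩ := hφ z₀ hz₀S
      exact ⟨z₀, hz₀S, (hφ3 z hzball hz2).symm⟩
    · rintro ⟨z₀, hz₀S, rfl⟩
      obtain ⟨hφ1, hφ2, hφ3⟩ := hφ z₀ hz₀S
      exact ⟨hball z₀ hz₀S hφ1, hφ2⟩
  have hinjφ : Set.InjOn φ S := by
    intro a ha b hb hab
    by_contra hne
    have h3r := hdS a ha b hb hne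
    have hrd3 : 3 * r ≤ d := by linarith
    obtain ⟨ha1, -, -⟩ := hφ a ha
    obtain ⟨hb1, -, -⟩ := hφ b hb
    have ht1 : dist a b ≤ dist a (φ a) + dist (φ a) b := dist_triangle _ _ _
    have ht2 : dist (φ a) b = dist (φ b) b := by rw [hab]
    have ha2 : dist a (φ a) ≤ r := by
      rw [dist_comm]; exact Metric.mem_closedBall.1 ha1
    have hb2 : dist (φ b) b ≤ r := Metric.mem_closedBall.1 hb1
    rw [ht2] at ht1
    linarith
  rw [hZeq]
  refine ⟨hSfin.image φ, Set.ncard_image_of_injOn hinjφ, ?_⟩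
  intro z₀' hmem
  rw [← hZeq] at hmem
  obtain ⟨hz1, hz2⟩ := hmem
  obtain ⟨w₀, hw₀S, hzball⟩ := hcover z₀' hz1 hz2
  have hQ'z : ‖Q.derivative.eval z₀' - Q.derivative.eval w₀‖ ≤ L * r := by
    have h1 := aux_mvt hQ'd (convex_closedBall w₀ r)
      (fun y hy => hLb y (hball2 w₀ hw₀S hy)) (Metric.mem_closedBall_self hr.le) hzball
    have h2 : ‖z₀' - w₀‖ ≤ r := by
      rw [← dist_eq_norm]; exact Metric.mem_closedBall.1 hzball
    calc ‖Q.derivative.eval z₀' - Q.derivative.eval w₀‖ ≤ L * ‖z₀' - w₀‖ := h1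
      _ ≤ L * r := mul_le_mul_of_nonneg_left h2 hL0
  have hQ'low : 3*m/4 ≤ ‖Q.derivative.eval z₀'‖ := by
    have h1 := hmS w₀ hw₀S
    have h2 : ‖Q.derivative.eval w₀‖ - ‖Q.derivative.eval z₀'‖
        ≤ ‖Q.derivative.eval z₀' - Q.derivative.eval w₀‖ := by
      rw [norm_sub_rev]
      exact norm_sub_norm_le _ _
    linarith
  set A := (ContinuousLinearMap.smulRight (1 : ℂ →L[ℂ] ℂ)
      (Q.derivative.eval z₀')).restrictScalars ℝ + fderiv ℝ h z₀' with hAdef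
  have hfd : HasFDerivAt (fun z => Q.eval z + h z) A z₀' :=
    (((Q.hasDerivAt z₀').hasFDerivAt).restrictScalars ℝ).add (hdiffh z₀').hasFDerivAt
  rw [hfd.fderiv]
  apply aux_bijective A (m/4) (by linarith)
  intro x
  have hx1 : ‖((ContinuousLinearMap.smulRight (1 : ℂ →L[ℂ] ℂ)
      (Q.derivative.eval z₀')).restrictScalars ℝ) x‖ = ‖Q.derivative.eval z₀'‖ * ‖x‖ := by
    simp [ContinuousLinearMap.smulRight_apply, smul_eq_mul, mul_comm]
  have hx2 : ‖(fderiv ℝ h z₀') x‖ ≤ δ * ‖x‖ :=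
    le_trans (ContinuousLinearMap.le_opNorm _ _)
      (mul_le_mul_of_nonneg_right
        ((hbnd z₀' (Metric.ball_subset_closedBall hz1)).2) (norm_nonneg _))
  set u := ((ContinuousLinearMap.smulRight (1 : ℂ →L[ℂ] ℂ)
      (Q.derivative.eval z₀')).restrictScalars ℝ) x with hu
  set v := (fderiv ℝ h z₀') x with hv
  have hAx : A x = u + v := rfl
  have h5 : ‖u‖ ≤ ‖u + v‖ + ‖v‖ := by
    calc ‖u‖ = ‖(u + v) + (-v)‖ := by rw [add_neg_cancel_right]
      _ ≤ ‖u + v‖ + ‖-v‖ := norm_add_le _ _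
      _ = ‖u + v‖ + ‖v‖ := by rw [norm_neg]
  rw [hAx]
  have h6 : 3*m/4 * ‖x‖ ≤ ‖Q.derivative.eval z₀'‖ * ‖x‖ :=
    mul_le_mul_of_nonneg_right hQ'low (norm_nonneg _)
  have h7 : δ * ‖x‖ ≤ m/4 * ‖x‖ := mul_le_mul_of_nonneg_right hδm (norm_nonneg _)
  rw [hx1] at h5
  linarith [mul_nonneg hm.le (norm_nonneg x)]
end

section
/- Let R ∈ MvPolynomial (Fin 2) ℂ with R.totalDegree = k ≥ 1 and with the coefficient of the monomial (X 1)^k in R nonzero, and let s : Polynomial ℂ with natDegree s = d ≥ 2. Let R̃ ∈ MvPolynomial (Fin 2) ℂ be the polynomial obtained from R by the substitution X 0 ↦ X 0 and X 1 ↦ X 1 − s(X 0) (i.e., R̃(w₁, w₂) = R(w₁, w₂ − s.eval w₁) for all w₁ w₂ : ℂ). Then R̃.totalDegree = k * d. -/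
open MvPolynomial Polynomial

private lemma finsupp_prod_two {M : Type*} [CommMonoid M] (m : Fin 2 →₀ ℕ)
    (g : Fin 2 → ℕ → M) (hg : ∀ i, g i 0 = 1) :
    m.prod g = g 0 (m 0) * g 1 (m 1) := by
  rw [Finsupp.prod_fintype _ _ (fun i => hg i), Fin.prod_univ_two]

private lemma finsupp_sum_two (m : Fin 2 →₀ ℕ) : (m.sum fun _ e => e) = m 0 + m 1 := by
  rw [Finsupp.sum_fintype _ _ (fun _ => rfl), Fin.sum_univ_two]

private lemma aeval_eq_eval' (x : Fin 2 → ℂ) (p : MvPolynomial (Fin 2) ℂ) :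
    MvPolynomial.aeval x p = MvPolynomial.eval x p := by
  rw [MvPolynomial.aeval_def, Algebra.algebraMap_self]
  rfl

/-- Upper bound on total degree of a substitution. -/
private lemma totalDegree_aeval_le (f : Fin 2 → MvPolynomial (Fin 2) ℂ)
    (p : MvPolynomial (Fin 2) ℂ) (D : ℕ) (hf : ∀ i, (f i).totalDegree ≤ D) :
    (MvPolynomial.aeval f p).totalDegree ≤ p.totalDegree * D := by
  conv_lhs => rw [p.as_sum, map_sum]
  refine (MvPolynomial.totalDegree_finset_sum _ _).trans (Finset.sup_le fun m hm => ?_)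
  rw [MvPolynomial.aeval_monomial]
  refine (MvPolynomial.totalDegree_mul _ _).trans ?_
  have h1 : (algebraMap ℂ (MvPolynomial (Fin 2) ℂ) (MvPolynomial.coeff m p)).totalDegree = 0 :=
    MvPolynomial.totalDegree_C _
  rw [h1, zero_add]
  have h2 : (m.prod fun i e => f i ^ e).totalDegree ≤ ∑ i ∈ m.support, m i * D := by
    rw [Finsupp.prod]
    refine (MvPolynomial.totalDegree_finset_prod _ _).trans (Finset.sum_le_sum fun i _ => ?_)
    exact (MvPolynomial.totalDegree_pow _ _).trans (Nat.mul_le_mul_left _ (hf i))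
  refine h2.trans ?_
  rw [← Finset.sum_mul]
  refine Nat.mul_le_mul_right _ ?_
  have h3 : (∑ i ∈ m.support, m i) = m.sum fun _ e => e := rfl
  exact h3 ▸ MvPolynomial.le_totalDegree hm

/-- Upper bound on nat degree of a one-variable specialization. -/
private lemma natDegree_aeval_le (f : Fin 2 → Polynomial ℂ)
    (p : MvPolynomial (Fin 2) ℂ) (hf : ∀ i, (f i).natDegree ≤ 1) :
    (MvPolynomial.aeval f p).natDegree ≤ p.totalDegree := by
  conv_lhs => rw [p.as_sum, map_sum]
  refine Polynomial.natDegree_sum_le_of_forall_le _ _ fun m hm => ?_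
  rw [MvPolynomial.aeval_monomial]
  refine (Polynomial.natDegree_mul_le).trans ?_
  have h1 : (algebraMap ℂ (Polynomial ℂ) (MvPolynomial.coeff m p)).natDegree = 0 :=
    Polynomial.natDegree_C _
  rw [h1, zero_add]
  have h2 : (m.prod fun i e => f i ^ e).natDegree ≤ ∑ i ∈ m.support, m i := by
    rw [Finsupp.prod]
    refine (Polynomial.natDegree_prod_le _ _).trans (Finset.sum_le_sum fun i _ => ?_)
    exact Polynomial.natDegree_pow_le.trans (by
      simpa using Nat.mul_le_mul_left (m i) (hf i))
  refine h2.trans ?_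
  have h3 : (∑ i ∈ m.support, m i) = m.sum fun _ e => e := rfl
  exact h3 ▸ MvPolynomial.le_totalDegree hm

/-- degree computation of Section 3: substituting `w₂ ↦ w₂ - s w₁`, where
`s` is a one-variable polynomial of degree `d ≥ 2`, into a degree-`k` polynomial `R`
whose `w₂^k`-coefficient is nonzero produces a polynomial of total degree exactly
`k * d`. -/
theorem totalDegree_substitution
    (R : MvPolynomial (Fin 2) ℂ) (k : ℕ) (hk : 1 ≤ k)
    (hdeg : R.totalDegree = k)
    (hcoeff : MvPolynomial.coeff (Finsupp.single (1 : Fin 2) k) R ≠ 0)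
    (s : Polynomial ℂ) (d : ℕ) (hd : 2 ≤ d) (hs : s.natDegree = d)
    (Rt : MvPolynomial (Fin 2) ℂ)
    (hRt : ∀ w₁ w₂ : ℂ, MvPolynomial.eval ![w₁, w₂] Rt =
      MvPolynomial.eval ![w₁, w₂ - s.eval w₁] R) :
    Rt.totalDegree = k * d := by
  classical
  have hs0 : s ≠ 0 := fun h => by simp [h] at hs; omega
  -- the substitution polynomial
  set S : MvPolynomial (Fin 2) ℂ := Polynomial.aeval (MvPolynomial.X 0) s with hS
  set σ : Fin 2 → MvPolynomial (Fin 2) ℂ := ![MvPolynomial.X 0, MvPolynomial.X 1 - S] with hσ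
  -- Step A : identify Rt
  have hRt' : Rt = MvPolynomial.aeval σ R := by
    apply MvPolynomial.funext
    intro x
    have hx : ![x 0, x 1] = x := by
      funext i; fin_cases i <;> rfl
    have h1 : MvPolynomial.eval x Rt = MvPolynomial.eval ![x 0, x 1 - s.eval (x 0)] R := by
      rw [← hx]; exact hRt (x 0) (x 1)
    rw [h1, ← aeval_eq_eval', ← aeval_eq_eval',
      MvPolynomial.comp_aeval_apply (f := σ) (MvPolynomial.aeval x) R]
    have harg : (fun i => MvPolynomial.aeval x (σ i)) = ![x 0, x 1 - s.eval (x 0)] := by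
      funext i
      fin_cases i
      · show MvPolynomial.aeval x (MvPolynomial.X 0) = x 0
        simp
      · show MvPolynomial.aeval x (MvPolynomial.X 1 - S) = x 1 - Polynomial.eval (x 0) s
        rw [map_sub, MvPolynomial.aeval_X, hS,
          ← Polynomial.aeval_algHom_apply (MvPolynomial.aeval x) (MvPolynomial.X 0) s]
        simp [Polynomial.coe_aeval_eq_eval]
    rw [harg]
  -- Step B : upper bound
  have hub : Rt.totalDegree ≤ k * d := by
    rw [hRt', ← hdeg]
    refine totalDegree_aeval_le σ R d fun i => ?_
    have hX1 : (MvPolynomial.X (1 : Fin 2) : MvPolynomial (Fin 2) ℂ).totalDegree ≤ d := by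
      rw [MvPolynomial.totalDegree_X]; omega
    fin_cases i
    · show (MvPolynomial.X 0 : MvPolynomial (Fin 2) ℂ).totalDegree ≤ d
      rw [MvPolynomial.totalDegree_X]; omega
    · show (MvPolynomial.X 1 - S).totalDegree ≤ d
      refine (MvPolynomial.totalDegree_sub _ _).trans (max_le hX1 ?_)
      · rw [hS, Polynomial.aeval_def, Polynomial.eval₂_eq_sum, Polynomial.sum_def]
        refine (MvPolynomial.totalDegree_finset_sum _ _).trans (Finset.sup_le fun j hj => ?_)
        refine (MvPolynomial.totalDegree_mul _ _).trans ?_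
        have := Polynomial.le_natDegree_of_mem_supp j hj
        simp only [MvPolynomial.algebraMap_eq, MvPolynomial.totalDegree_C, zero_add]
        exact (MvPolynomial.totalDegree_pow _ _).trans (by simpa using hs ▸ this)
  -- Step C : lower bound via one-variable specialization
  set Q : Polynomial ℂ := MvPolynomial.aeval ![Polynomial.X, -s] R with hQ
  have hQRt : Q = MvPolynomial.aeval ![Polynomial.X, (0 : Polynomial ℂ)] Rt := by
    rw [hQ, hRt', MvPolynomial.comp_aeval_apply (f := σ)
      (MvPolynomial.aeval ![Polynomial.X, (0 : Polynomial ℂ)]) R]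
    have harg : (fun i => MvPolynomial.aeval ![Polynomial.X, (0 : Polynomial ℂ)] (σ i)) =
        ![Polynomial.X, -s] := by
      funext i
      fin_cases i
      · show MvPolynomial.aeval ![Polynomial.X, (0 : Polynomial ℂ)] (MvPolynomial.X 0) =
          Polynomial.X
        simp
      · show MvPolynomial.aeval ![Polynomial.X, (0 : Polynomial ℂ)] (MvPolynomial.X 1 - S) = -s
        rw [map_sub, MvPolynomial.aeval_X, hS,
          ← Polynomial.aeval_algHom_apply
            (MvPolynomial.aeval ![Polynomial.X, (0 : Polynomial ℂ)]) (MvPolynomial.X 0) s]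
        simp
    rw [harg]
  -- the coefficient of degree k*d in Q is nonzero
  have hcoeffQ : Q.coeff (k * d) ≠ 0 := by
    rw [hQ]
    conv_lhs => rw [R.as_sum, map_sum, Polynomial.finset_sum_coeff]
    rw [Finset.sum_eq_single (Finsupp.single (1 : Fin 2) k)]
    · rw [MvPolynomial.aeval_monomial,
        finsupp_prod_two _ _ (fun i => pow_zero _), Polynomial.algebraMap_eq,
        Polynomial.coeff_C_mul]
      simp only [Finsupp.single_eq_of_ne' (by decide : (1 : Fin 2) ≠ 0), Finsupp.single_eq_same,
        Matrix.cons_val_zero, Matrix.cons_val_one, Matrix.head_cons, pow_zero, one_mul]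
      have hnd : ((-s) ^ k).natDegree = k * d := by
        rw [Polynomial.natDegree_pow, Polynomial.natDegree_neg, hs]
      have hlc : ((-s) ^ k).coeff (k * d) ≠ 0 := by
        rw [← hnd, Polynomial.coeff_natDegree, Polynomial.leadingCoeff_pow,
          Polynomial.leadingCoeff_neg]
        exact pow_ne_zero _ (neg_ne_zero.mpr (Polynomial.leadingCoeff_ne_zero.mpr hs0))
      exact mul_ne_zero hcoeff hlc
    · intro m hm hne
      rw [MvPolynomial.aeval_monomial, finsupp_prod_two _ _ (fun i => pow_zero _),
        Polynomial.algebraMap_eq, Polynomial.coeff_C_mul]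
      simp only [Matrix.cons_val_zero, Matrix.cons_val_one, Matrix.head_cons]
      have hmsum : m 0 + m 1 ≤ k := by
        rw [← finsupp_sum_two m, ← hdeg]; exact MvPolynomial.le_totalDegree hm
      have hne' : ¬(m 0 = 0 ∧ m 1 = k) := by
        intro ⟨h0, h1⟩
        apply hne
        ext i
        fin_cases i
        · simp [h0, Finsupp.single_eq_of_ne' (by decide : (1 : Fin 2) ≠ 0)]
        · simp [h1]
      have hdlt : (Polynomial.X ^ m 0 * (-s) ^ m 1).natDegree < k * d := by
        refine lt_of_le_of_lt Polynomial.natDegree_mul_le ?_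
        have hX : (Polynomial.X ^ m 0 : Polynomial ℂ).natDegree = m 0 := by
          simp
        have hsk : ((-s) ^ m 1).natDegree ≤ m 1 * d := by
          rw [Polynomial.natDegree_pow, Polynomial.natDegree_neg, hs]
        rw [hX]
        refine lt_of_le_of_lt (Nat.add_le_add_left hsk _) ?_
        -- m 0 + m 1 * d < k * d
        have hb : m 1 < k ∨ (m 1 = k ∧ 1 ≤ m 0) := by omega
        set c := k - m 1 with hc
        have hck : k = m 1 + c := by omega
        have hc1 : 1 ≤ c := by
          rcases hb with h | h
          · omega
          · exfalso; omega
        have ha : m 0 ≤ c := by omega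
        have hcd : 2 * c ≤ c * d := by
          calc 2 * c = c * 2 := by ring
          _ ≤ c * d := Nat.mul_le_mul_left c hd
        have : m 0 < c * d := by omega
        calc m 0 + m 1 * d < c * d + m 1 * d := by omega
        _ = (m 1 + c) * d := by ring
        _ = k * d := by rw [← hck]
      rw [Polynomial.coeff_eq_zero_of_natDegree_lt hdlt, mul_zero]
    · intro h
      exact absurd (MvPolynomial.mem_support_iff.mpr hcoeff) h
  have hlb : k * d ≤ Rt.totalDegree := by
    have h1 : k * d ≤ Q.natDegree := Polynomial.le_natDegree_of_ne_zero hcoeffQ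
    have h2 : Q.natDegree ≤ Rt.totalDegree := by
      rw [hQRt]
      refine natDegree_aeval_le _ _ fun i => ?_
      fin_cases i <;> simp
    omega
  omega
end
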